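/- Let λ > 0 and let f(t) solve the ODE df/dt = λ A f on ℝ² with A = [[−1, 1], [1, −1]] and initial datum f^I having nonnegative entries with f_1^I + f_2^I = 1, so the steady state is f^∞ = (1/2, 1/2). Let ψ be an entropy generator such that either (i) ψ'' is convex on (0,∞), or (ii) ψ' is concave on (0,1) and ψ' is convex on (1,∞). Then the relative entropy decays with rate 4λ: e_ψ(f(t)|f^∞) ≤ e^{−4λ t} · e_ψ(f^I|f^∞) for all t ≥ 0. -/

import Mathlib

open Real Set

open Topology Filter

section Aux
variable (ψ : ℝ → ℝ)

lemma aux_hasDerivAt_psi (hψsmooth : ContDiffOn ℝ 2 ψ (Ioi 0)) :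
    ∀ x ∈ Ioi (0:ℝ), HasDerivAt ψ (deriv ψ x) x := fun x hx =>
  ((hψsmooth.differentiableOn (by norm_num)).differentiableAt
    (isOpen_Ioi.mem_nhds hx)).hasDerivAt

lemma aux_contDiffOn_deriv (hψsmooth : ContDiffOn ℝ 2 ψ (Ioi 0)) :
    ContDiffOn ℝ 1 (deriv ψ) (Ioi 0) :=
  hψsmooth.deriv_of_isOpen isOpen_Ioi (by norm_num)

lemma aux_hasDerivAt_dpsi (hψsmooth : ContDiffOn ℝ 2 ψ (Ioi 0)) :
    ∀ x ∈ Ioi (0:ℝ), HasDerivAt (deriv ψ) (deriv (deriv ψ) x) x := fun x hx =>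
  (((aux_contDiffOn_deriv ψ hψsmooth).differentiableOn (by norm_num)).differentiableAt
    (isOpen_Ioi.mem_nhds hx)).hasDerivAt

/-- The comparison lemma: `E w / w² ≤ E v / v²` in cross-multiplied form. -/
lemma aux_compare (hψcont : ContinuousOn ψ (Ici 0))
    (hψsmooth : ContDiffOn ℝ 2 ψ (Ioi 0)) (hψ1 : ψ 1 = 0)
    (hkey : ∀ x ∈ Ioo (0:ℝ) 1,
      deriv ψ (1+x) - deriv ψ (1-x) ≤ x * (deriv (deriv ψ) (1+x) + deriv (deriv ψ) (1-x))) :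
    ∀ w v : ℝ, 0 < w → w ≤ v → v ≤ 1 →
      (ψ (1+w) + ψ (1-w)) * v^2 ≤ (ψ (1+v) + ψ (1-v)) * w^2 := by
  set p := deriv ψ with hp
  set q := deriv (deriv ψ) with hq
  have hpd := aux_hasDerivAt_psi ψ hψsmooth
  have hqd := aux_hasDerivAt_dpsi ψ hψsmooth
  have hψc : ContinuousOn ψ (Ioi 0) := hψsmooth.continuousOn
  have hpc : ContinuousOn p (Ioi 0) := (aux_contDiffOn_deriv ψ hψsmooth).continuousOn
  set F : ℝ → ℝ := fun y => y * (p (1+y) - p (1-y)) - 2 * (ψ (1+y) + ψ (1-y)) with hF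
  -- derivative building blocks
  have hmem : ∀ y ∈ Ico (0:ℝ) 1, (1+y) ∈ Ioi (0:ℝ) ∧ (1-y) ∈ Ioi (0:ℝ) := by
    intro y hy
    constructor <;> simp only [mem_Ioi] <;> [linarith [hy.1]; linarith [hy.2]]
  have hD1 : ∀ x ∈ Ioo (0:ℝ) 1, HasDerivAt (fun y : ℝ => ψ (1+y)) (p (1+x)) x := by
    intro x hx
    have := (hpd (1+x) (hmem x ⟨hx.1.le, hx.2⟩).1).comp x ((hasDerivAt_id x).const_add 1)
    simpa [Function.comp_def] using this
  have hD2 : ∀ x ∈ Ioo (0:ℝ) 1, HasDerivAt (fun y : ℝ => ψ (1-y)) (-p (1-x)) x := by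
    intro x hx
    have := (hpd (1-x) (hmem x ⟨hx.1.le, hx.2⟩).2).comp x ((hasDerivAt_id x).const_sub 1)
    simpa [Function.comp_def] using this
  have hD3 : ∀ x ∈ Ioo (0:ℝ) 1, HasDerivAt (fun y : ℝ => p (1+y)) (q (1+x)) x := by
    intro x hx
    have := (hqd (1+x) (hmem x ⟨hx.1.le, hx.2⟩).1).comp x ((hasDerivAt_id x).const_add 1)
    simpa [Function.comp_def] using this
  have hD4 : ∀ x ∈ Ioo (0:ℝ) 1, HasDerivAt (fun y : ℝ => p (1-y)) (-q (1-x)) x := by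
    intro x hx
    have := (hqd (1-x) (hmem x ⟨hx.1.le, hx.2⟩).2).comp x ((hasDerivAt_id x).const_sub 1)
    simpa [Function.comp_def] using this
  have hFd : ∀ x ∈ Ioo (0:ℝ) 1,
      HasDerivAt F (x * (q (1+x) + q (1-x)) - (p (1+x) - p (1-x))) x := by
    intro x hx
    have h := ((hasDerivAt_id x).mul ((hD3 x hx).sub (hD4 x hx))).sub
      (((hD1 x hx).add (hD2 x hx)).const_mul 2)
    exact h.congr_deriv (by simp only [Pi.sub_apply, id_eq]; ring)
  have hcont1 : ContinuousOn (fun y : ℝ => ψ (1+y)) (Ico 0 1) :=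
    hψc.comp (Continuous.continuousOn (by continuity)) (fun y hy => (hmem y hy).1)
  have hcont2 : ContinuousOn (fun y : ℝ => ψ (1-y)) (Ico 0 1) :=
    hψc.comp (Continuous.continuousOn (by continuity)) (fun y hy => (hmem y hy).2)
  have hcont3 : ContinuousOn (fun y : ℝ => p (1+y)) (Ico 0 1) :=
    hpc.comp (Continuous.continuousOn (by continuity)) (fun y hy => (hmem y hy).1)
  have hcont4 : ContinuousOn (fun y : ℝ => p (1-y)) (Ico 0 1) :=
    hpc.comp (Continuous.continuousOn (by continuity)) (fun y hy => (hmem y hy).2)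
  have hFc : ContinuousOn F (Ico 0 1) := by
    apply ContinuousOn.sub
    · exact (continuous_id.continuousOn).mul (hcont3.sub hcont4)
    · exact continuousOn_const.mul (hcont1.add hcont2)
  have hFmono : MonotoneOn F (Ico 0 1) := by
    apply monotoneOn_of_deriv_nonneg (convex_Ico 0 1) hFc
    · rw [interior_Ico]
      exact fun x hx => (hFd x hx).differentiableAt.differentiableWithinAt
    · rw [interior_Ico]
      intro x hx
      rw [(hFd x hx).deriv]
      have := hkey x hx
      linarith
  have hFnn : ∀ x ∈ Ico (0:ℝ) 1, 0 ≤ F x := by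
    intro x hx
    have h0 : F 0 = 0 := by simp [hF, hψ1]
    have := hFmono (left_mem_Ico.mpr one_pos) hx hx.1
    rwa [h0] at this
  set G : ℝ → ℝ := fun y => (ψ (1+y) + ψ (1-y)) / y^2 with hG
  have hGd : ∀ x ∈ Ioo (0:ℝ) 1, HasDerivAt G
      (((p (1+x) + -p (1-x)) * x^2 - (ψ (1+x) + ψ (1-x)) * (2 * x^1)) / (x^2)^2) x := by
    intro x hx
    exact ((hD1 x hx).add (hD2 x hx)).div (hasDerivAt_pow 2 x) (pow_ne_zero 2 (ne_of_gt hx.1))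
  have hGmono : MonotoneOn G (Ioo 0 1) := by
    apply monotoneOn_of_deriv_nonneg (convex_Ioo 0 1)
    · intro x hx
      exact ((hGd x hx).differentiableAt.continuousAt).continuousWithinAt
    · rw [interior_Ioo]
      exact fun x hx => (hGd x hx).differentiableAt.differentiableWithinAt
    · rw [interior_Ioo]
      intro x hx
      rw [(hGd x hx).deriv]
      apply div_nonneg _ (by positivity)
      have hFx := hFnn x ⟨hx.1.le, hx.2⟩
      have : (p (1+x) + -p (1-x)) * x^2 - (ψ (1+x) + ψ (1-x)) * (2 * x^1) = x * F x := by
        simp only [hF]; ring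
      rw [this]
      exact mul_nonneg hx.1.le hFx
  -- conclusion for v < 1
  have hmain : ∀ w v : ℝ, 0 < w → w ≤ v → v < 1 →
      (ψ (1+w) + ψ (1-w)) * v^2 ≤ (ψ (1+v) + ψ (1-v)) * w^2 := by
    intro w v hw hwv hv1
    have hGle : G w ≤ G v := hGmono ⟨hw, lt_of_le_of_lt hwv hv1⟩ ⟨lt_of_lt_of_le hw hwv, hv1⟩ hwv
    rw [hG] at hGle
    rw [div_le_div_iff₀ (pow_pos hw 2) (pow_pos (lt_of_lt_of_le hw hwv) 2)] at hGle
    exact hGle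
  intro w v hw hwv hv1
  rcases lt_or_eq_of_le hv1 with hv | hv
  · exact hmain w v hw hwv hv
  · subst hv
    -- limit argument as v → 1⁻
    have hw1 : w ≤ 1 := hwv
    rcases lt_or_eq_of_le hw1 with hw1' | hw1'
    · have hev : ∀ᶠ v' in 𝓝[<] (1:ℝ), (ψ (1+w) + ψ (1-w)) * v'^2 ≤ (ψ (1+v') + ψ (1-v')) * w^2 := by
        filter_upwards [Ioo_mem_nhdsLT_of_mem (⟨hw1', le_refl 1⟩ : (1:ℝ) ∈ Ioc w 1)] with v' hv'
        exact hmain w v' hw hv'.1.le hv'.2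
      have hT1 : Filter.Tendsto (fun v' : ℝ => (ψ (1+w) + ψ (1-w)) * v'^2) (𝓝[<] (1:ℝ))
          (𝓝 ((ψ (1+w) + ψ (1-w)) * 1^2)) :=
        ((continuous_const.mul (continuous_pow 2)).tendsto 1).mono_left nhdsWithin_le_nhds
      have hT1p : Filter.Tendsto (fun v' : ℝ => 1 + v') (𝓝[<] (1:ℝ)) (𝓝 2) := by
        exact ((Continuous.tendsto' (continuous_const.add continuous_id) 1 2 (by norm_num))).mono_left
          nhdsWithin_le_nhds
      have hT2p : Filter.Tendsto (fun v' : ℝ => 1 - v') (𝓝[<] (1:ℝ)) (𝓝[Ici 0] (0:ℝ)) := by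
        apply tendsto_nhdsWithin_of_tendsto_nhds_of_eventually_within
        · exact ((Continuous.tendsto' (continuous_const.sub continuous_id) 1 0 (by norm_num))).mono_left
            nhdsWithin_le_nhds
        · filter_upwards [self_mem_nhdsWithin] with v' hv'
          simp only [mem_Iio] at hv'
          simp only [mem_Ici]
          linarith
      have hc2 : ContinuousAt ψ 2 :=
        hψc.continuousAt (isOpen_Ioi.mem_nhds (by norm_num : (2:ℝ) ∈ Ioi 0))
      have hc0 : ContinuousWithinAt ψ (Ici 0) 0 := hψcont 0 self_mem_Ici
      have hA : Filter.Tendsto (fun v' : ℝ => ψ (1 + v')) (𝓝[<] (1:ℝ)) (𝓝 (ψ 2)) :=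
        hc2.tendsto.comp hT1p
      have hB : Filter.Tendsto (fun v' : ℝ => ψ (1 - v')) (𝓝[<] (1:ℝ)) (𝓝 (ψ 0)) :=
        hc0.tendsto.comp hT2p
      have hT2 : Filter.Tendsto (fun v' : ℝ => (ψ (1+v') + ψ (1-v')) * w^2) (𝓝[<] (1:ℝ))
          (𝓝 ((ψ (1+1) + ψ (1-1)) * w^2)) := by
        have h2 : ψ (1+(1:ℝ)) = ψ 2 := by norm_num
        have h0 : ψ (1-(1:ℝ)) = ψ 0 := by norm_num
        rw [h2, h0]
        exact (hA.add hB).mul_const _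
      have := le_of_tendsto_of_tendsto hT1 hT2 hev
      norm_num at this ⊢
      linarith
    · subst hw1'
      norm_num
end Aux


section Key
variable (ψ : ℝ → ℝ)

/-- Case (i): `ψ''` convex gives the key inequality. -/
lemma aux_key_i (hψsmooth : ContDiffOn ℝ 2 ψ (Ioi 0))
    (hconv : ConvexOn ℝ (Ioi 0) (deriv (deriv ψ)))
    {x : ℝ} (hx : x ∈ Ioo (0:ℝ) 1) :
    deriv ψ (1+x) - deriv ψ (1-x) ≤ x * (deriv (deriv ψ) (1+x) + deriv (deriv ψ) (1-x)) := by
  obtain ⟨hx0, hx1⟩ := hx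
  set p := deriv ψ with hp
  set q := deriv (deriv ψ) with hq
  -- MVT for E' y = p (1+y) - p (1-y) on [0, x]
  have hmemp : ∀ y ∈ Icc (0:ℝ) x, (1+y) ∈ Ioi (0:ℝ) ∧ (1-y) ∈ Ioi (0:ℝ) := by
    intro y hy
    constructor <;> simp only [mem_Ioi] <;> [linarith [hy.1]; linarith [hy.2]]
  have hder : ∀ y ∈ Ioo (0:ℝ) x, HasDerivAt (fun y => p (1+y) - p (1-y))
      (q (1+y) + q (1-y)) y := by
    intro y hy
    have h1 : HasDerivAt (fun y : ℝ => p (1+y)) (q (1+y) * 1) y :=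
      (aux_hasDerivAt_dpsi ψ hψsmooth (1+y)
        (hmemp y ⟨hy.1.le, hy.2.le⟩).1).comp y ((hasDerivAt_id y).const_add 1)
    have h2 : HasDerivAt (fun y : ℝ => p (1-y)) (q (1-y) * (-1)) y :=
      (aux_hasDerivAt_dpsi ψ hψsmooth (1-y)
        (hmemp y ⟨hy.1.le, hy.2.le⟩).2).comp y ((hasDerivAt_id y).const_sub 1)
    have := h1.sub h2
    exact this.congr_deriv (by ring)
  have hcont : ContinuousOn (fun y => p (1+y) - p (1-y)) (Icc 0 x) := by
    have hpc : ContinuousOn p (Ioi 0) := (aux_contDiffOn_deriv ψ hψsmooth).continuousOn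
    apply ContinuousOn.sub
    · exact hpc.comp (Continuous.continuousOn (by continuity)) (fun y hy => (hmemp y hy).1)
    · exact hpc.comp (Continuous.continuousOn (by continuity)) (fun y hy => (hmemp y hy).2)
  obtain ⟨ξ, hξ, hslope⟩ := exists_hasDerivAt_eq_slope
    (fun y => p (1+y) - p (1-y)) (fun y => q (1+y) + q (1-y)) hx0 hcont hder
  -- χ monotone from convexity
  have hchi : q (1+ξ) + q (1-ξ) ≤ q (1+x) + q (1-x) := by
    set θ := (x - ξ)/(2*x) with hθ
    have hθ0 : 0 ≤ θ := by
      apply div_nonneg (by linarith [hξ.2]) (by linarith)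
    have hθ1 : 0 ≤ 1 - θ := by
      rw [hθ, sub_nonneg]
      rw [div_le_one (by linarith)]
      linarith [hξ.1]
    have hm1 : (1-x) ∈ Ioi (0:ℝ) := by simp only [mem_Ioi]; linarith
    have hm2 : (1+x) ∈ Ioi (0:ℝ) := by simp only [mem_Ioi]; linarith
    have e1 : θ • (1-x) + (1-θ) • (1+x) = 1 + ξ := by
      simp only [smul_eq_mul, hθ]; field_simp; ring
    have e2 : (1-θ) • (1-x) + θ • (1+x) = 1 - ξ := by
      simp only [smul_eq_mul, hθ]; field_simp; ring
    have c1 := hconv.2 hm1 hm2 hθ0 hθ1 (by ring)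
    have c2 := hconv.2 hm1 hm2 hθ1 hθ0 (by ring)
    rw [e1] at c1
    rw [e2] at c2
    simp only [smul_eq_mul] at c1 c2
    nlinarith [c1, c2]
  have hE : p (1+x) - p (1-x) = x * (q (1+ξ) + q (1-ξ)) := by
    rw [hslope]; field_simp; ring
  rw [hE]
  exact mul_le_mul_of_nonneg_left hchi hx0.le

end Key

section Key2
variable (ψ : ℝ → ℝ)

/-- Case (ii): `ψ'` concave on `(0,1)`, convex on `(1,∞)` gives the key inequality. -/
lemma aux_key_ii (hψsmooth : ContDiffOn ℝ 2 ψ (Ioi 0))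
    (hconc : ConcaveOn ℝ (Ioo 0 1) (deriv ψ))
    (hconv : ConvexOn ℝ (Ioi 1) (deriv ψ))
    {x : ℝ} (hx : x ∈ Ioo (0:ℝ) 1) :
    deriv ψ (1+x) - deriv ψ (1-x) ≤ x * (deriv (deriv ψ) (1+x) + deriv (deriv ψ) (1-x)) := by
  obtain ⟨hx0, hx1⟩ := hx
  set p := deriv ψ with hp
  set q := deriv (deriv ψ) with hq
  have hpc : ContinuousOn p (Ioi 0) := (aux_contDiffOn_deriv ψ hψsmooth).continuousOn
  have hder := aux_hasDerivAt_dpsi ψ hψsmooth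
  -- right interval [1, 1+x]
  obtain ⟨ξ₁, hξ₁, hs₁⟩ := exists_hasDerivAt_eq_slope p q (by linarith : (1:ℝ) < 1 + x)
    (hpc.mono (fun y hy => by simp only [mem_Ioi]; linarith [hy.1] : Icc (1:ℝ) (1+x) ⊆ Ioi 0))
    (fun y hy => hder y (by simp only [mem_Ioi]; linarith [hy.1]))
  -- left interval [1-x, 1]
  obtain ⟨ξ₂, hξ₂, hs₂⟩ := exists_hasDerivAt_eq_slope p q (by linarith : 1 - x < (1:ℝ))
    (hpc.mono (fun y hy => by simp only [mem_Ioi]; linarith [hy.1] : Icc (1-x) (1:ℝ) ⊆ Ioi 0))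
    (fun y hy => hder y (by simp only [mem_Ioi]; linarith [hy.1]))
  have hd₁ : DifferentiableAt ℝ p ξ₁ :=
    (hder ξ₁ (by simp only [mem_Ioi]; linarith [hξ₁.1])).differentiableAt
  have hd₂ : DifferentiableAt ℝ p ξ₂ :=
    (hder ξ₂ (by simp only [mem_Ioi]; linarith [hξ₂.1])).differentiableAt
  have hdL : DifferentiableAt ℝ p (1-x) :=
    (hder (1-x) (by simp only [mem_Ioi]; linarith)).differentiableAt
  have hdR : DifferentiableAt ℝ p (1+x) :=
    (hder (1+x) (by simp only [mem_Ioi]; linarith)).differentiableAt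
  have hm₁ : ξ₁ ∈ Ioi (1:ℝ) := hξ₁.1
  have hm₁' : (1+x) ∈ Ioi (1:ℝ) := by simp only [mem_Ioi]; linarith
  have hm₂ : ξ₂ ∈ Ioo (0:ℝ) 1 := ⟨by linarith [hξ₂.1], hξ₂.2⟩
  have hm₂' : (1-x) ∈ Ioo (0:ℝ) 1 := ⟨by linarith, by linarith⟩
  have hq₁ : q ξ₁ ≤ q (1+x) :=
    (hconv.deriv_le_slope hm₁ hm₁' hξ₁.2 hd₁).trans
      (hconv.slope_le_deriv hm₁ hm₁' hξ₁.2 hdR)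
  have hq₂ : q ξ₂ ≤ q (1-x) := by
    have h1 := hconc.deriv_le_slope hm₂' hm₂ hξ₂.1 hd₂
    have h2 := hconc.slope_le_deriv hm₂' hm₂ hξ₂.1 hdL
    exact h1.trans h2
  have e₁ : p (1+x) - p 1 = x * q ξ₁ := by
    rw [hs₁, show (1:ℝ)+x-1 = x by ring]; field_simp
  have e₂ : p 1 - p (1-x) = x * q ξ₂ := by
    rw [hs₂, show (1:ℝ)-(1-x) = x by ring]; field_simp
  have : p (1+x) - p (1-x) = x * q ξ₁ + x * q ξ₂ := by linarith
  rw [this]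
  have := mul_le_mul_of_nonneg_left hq₁ hx0.le
  have := mul_le_mul_of_nonneg_left hq₂ hx0.le
  linarith

end Key2

/-- entropy decay at rate `4λ` for the two-velocity space-homogeneous
BGK ODE `df/dt = λ A f` with `A = [[-1,1],[1,-1]]`, steady state `f^∞ = (1/2, 1/2)`,
for entropy generators `ψ` with `ψ''` convex, or `ψ'` concave on `(0,1)` and convex
on `(1,∞)`. The relative entropy is `e_ψ(f|f^∞) = ψ(2 f₁)·(1/2) + ψ(2 f₂)·(1/2)`. -/
theorem stmt_0
    (lam : ℝ) (hlam : 0 < lam)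
    (ψ : ℝ → ℝ)
    (hψcont : ContinuousOn ψ (Ici 0))
    (hψsmooth : ContDiffOn ℝ 2 ψ (Ioi 0))
    (hψ1 : ψ 1 = 0)
    (hψnonneg : ∀ x ∈ Ici (0:ℝ), 0 ≤ ψ x)
    (hψ'' : ∀ x ∈ Ioi (0:ℝ), 0 ≤ deriv (deriv ψ) x)
    (hcase : ConvexOn ℝ (Ioi 0) (deriv (deriv ψ)) ∨
      (ConcaveOn ℝ (Ioo 0 1) (deriv ψ) ∧ ConvexOn ℝ (Ioi 1) (deriv ψ)))
    (fI : ℝ × ℝ) (hI1 : 0 ≤ fI.1) (hI2 : 0 ≤ fI.2) (hIsum : fI.1 + fI.2 = 1)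
    (f : ℝ → ℝ × ℝ)
    (hf0 : f 0 = fI)
    (hode : ∀ t : ℝ, HasDerivAt f (lam • (-(f t).1 + (f t).2, (f t).1 - (f t).2)) t) :
    ∀ t : ℝ, 0 ≤ t →
      ψ (2 * (f t).1) * (1/2) + ψ (2 * (f t).2) * (1/2) ≤
        Real.exp (-(4 * lam) * t) * (ψ (2 * fI.1) * (1/2) + ψ (2 * fI.2) * (1/2)) := by
  -- component derivatives
  have h1 : ∀ t, HasDerivAt (fun t => (f t).1) (lam * (-(f t).1 + (f t).2)) t := by
    intro t
    have h := (ContinuousLinearMap.fst ℝ ℝ ℝ).hasFDerivAt.comp_hasDerivAt t (hode t)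
    simpa [Function.comp_def] using h
  have h2 : ∀ t, HasDerivAt (fun t => (f t).2) (lam * ((f t).1 - (f t).2)) t := by
    intro t
    have h := (ContinuousLinearMap.snd ℝ ℝ ℝ).hasFDerivAt.comp_hasDerivAt t (hode t)
    simpa [Function.comp_def] using h
  -- conservation of mass
  have hsum : ∀ t, (f t).1 + (f t).2 = 1 := by
    have hd : ∀ t, HasDerivAt (fun t => (f t).1 + (f t).2) 0 t := by
      intro t
      have h := (h1 t).add (h2 t)
      exact h.congr_deriv (by ring)
    intro t
    have hc := is_const_of_deriv_eq_zero (f := fun t => (f t).1 + (f t).2)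
      (fun u => (hd u).differentiableAt) (fun u => (hd u).deriv) t 0
    rw [hf0] at hc
    rw [hc, hIsum]
  -- decay of the difference
  set a := fI.1 - fI.2 with ha
  have hdiff : ∀ t, (f t).1 - (f t).2 = a * Real.exp (-(2*lam)*t) := by
    have hd : ∀ t, HasDerivAt (fun t => ((f t).1 - (f t).2) * Real.exp (2*lam*t)) 0 t := by
      intro t
      have he : HasDerivAt (fun t : ℝ => Real.exp (2*lam*t)) (Real.exp (2*lam*t) * (2*lam)) t := by
        apply HasDerivAt.exp
        simpa using (hasDerivAt_id t).const_mul (2*lam)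
      have h := ((h1 t).sub (h2 t)).mul he
      exact h.congr_deriv (by simp only [Pi.sub_apply]; ring)
    intro t
    have hc := is_const_of_deriv_eq_zero (f := fun t => ((f t).1 - (f t).2) * Real.exp (2*lam*t))
      (fun u => (hd u).differentiableAt) (fun u => (hd u).deriv) t 0
    simp only [mul_zero, Real.exp_zero, mul_one, hf0] at hc
    have hne : Real.exp (2*lam*t) ≠ 0 := Real.exp_ne_zero _
    have hinv : Real.exp (-(2*lam)*t) * Real.exp (2*lam*t) = 1 := by
      rw [← Real.exp_add]
      ring_nf
      exact Real.exp_zero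
    calc (f t).1 - (f t).2
        = ((f t).1 - (f t).2) * Real.exp (2*lam*t) * Real.exp (-(2*lam)*t) := by
          rw [mul_assoc, mul_comm (Real.exp (2*lam*t)), hinv, mul_one]
      _ = a * Real.exp (-(2*lam)*t) := by rw [hc]
  intro t ht
  set s := Real.exp (-(2*lam)*t) with hs
  have hs0 : 0 < s := Real.exp_pos _
  have hs1 : s ≤ 1 := by
    rw [hs, Real.exp_le_one_iff]
    nlinarith
  have hs2 : Real.exp (-(4*lam)*t) = s^2 := by
    rw [hs, sq, ← Real.exp_add]
    ring_nf
  have e1 : 2 * (f t).1 = 1 + a * s := by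
    have := hsum t; have := hdiff t; linarith
  have e2 : 2 * (f t).2 = 1 - a * s := by
    have := hsum t; have := hdiff t; linarith
  have eI1 : 2 * fI.1 = 1 + a := by rw [ha]; linarith
  have eI2 : 2 * fI.2 = 1 - a := by rw [ha]; linarith
  rw [e1, e2, eI1, eI2, hs2]
  -- key comparison
  have hkey : ∀ x ∈ Ioo (0:ℝ) 1,
      deriv ψ (1+x) - deriv ψ (1-x) ≤ x * (deriv (deriv ψ) (1+x) + deriv (deriv ψ) (1-x)) := by
    rcases hcase with hc | ⟨hc1, hc2⟩
    · exact fun x hx => aux_key_i ψ hψsmooth hc hx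
    · exact fun x hx => aux_key_ii ψ hψsmooth hc1 hc2 hx
  have hcmp := aux_compare ψ hψcont hψsmooth hψ1 hkey
  rcases eq_or_ne a 0 with h0 | hne
  · rw [h0]
    simp [hψ1]
  · have haL : -1 ≤ a := by rw [ha]; linarith
    have haR : a ≤ 1 := by rw [ha]; linarith
    rcases hne.lt_or_gt with hneg | hpos
    · set b := -a with hb
      have hbpos : 0 < b := by rw [hb]; linarith
      have hb1 : b ≤ 1 := by rw [hb]; linarith
      have hkey2 := hcmp (b*s) b (by positivity) (mul_le_of_le_one_right hbpos.le hs1) hb1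
      have hb2 : (0:ℝ) < b^2 := by positivity
      have h' : (ψ (1+b*s) + ψ (1-b*s)) * b^2 ≤ ((ψ (1+b) + ψ (1-b)) * s^2) * b^2 := by
        nlinarith [hkey2]
      have hfin := le_of_mul_le_mul_right h' hb2
      have r1 : (1:ℝ) + a * s = 1 - b*s := by rw [hb]; ring
      have r2 : (1:ℝ) - a * s = 1 + b*s := by rw [hb]; ring
      have r3 : (1:ℝ) + a = 1 - b := by rw [hb]; ring
      have r4 : (1:ℝ) - a = 1 + b := by rw [hb]; ring
      rw [r1, r2, r3, r4]
      nlinarith [hfin]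
    · have hkey2 := hcmp (a*s) a (by positivity) (mul_le_of_le_one_right hpos.le hs1) haR
      have ha2 : (0:ℝ) < a^2 := by positivity
      have h' : (ψ (1+a*s) + ψ (1-a*s)) * a^2 ≤ ((ψ (1+a) + ψ (1-a)) * s^2) * a^2 := by
        nlinarith [hkey2]
      have hfin := le_of_mul_le_mul_right h' ha2
      nlinarith [hfin]
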